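/- arXiv:2412.11723 — 2 statements merged into one kernel-verified Lean document; each statement's English description precedes it below -/
import Mathlib

section
/- Let Y be a finite scheme over a field k (i.e. Y = Spec B with B a finite-dimensional k-algebra) embedded as a closed subscheme of projective space ℙ^N_k. Then for every d ≥ dim_k B − 1, the restriction map H⁰(ℙ^N_k, O(d)) → H⁰(Y, O_Y(d)) is surjective. -/
open Module

lemma existsUnit {K B : Type*} [Field K] [Infinite K] [CommRing B] [Algebra K B]
    [FiniteDimensional K B] (V : Submodule K B) (hI : V * ⊤ = ⊤) :
    ∃ v ∈ V, IsUnit v := by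
  have hart : IsArtinianRing B := isArtinian_of_tower K inferInstance
  by_contra hno
  push_neg at hno
  have : Finite {I : Ideal B // I.IsMaximal} := by
    have := IsArtinianRing.setOfPred_isMaximal_finite B
    exact this.to_subtype
  set p : {I : Ideal B // I.IsMaximal} → Submodule K ↥V :=
    fun I => ((I.1.restrictScalars K).comap V.subtype) with hp
  have hcover : ⋃ i, (p i : Set ↥V) = Set.univ := by
    ext x
    simp only [Set.mem_iUnion, Set.mem_univ, iff_true]
    obtain ⟨I, hI, hxI⟩ := exists_max_ideal_of_mem_nonunits (hno x.1 x.2)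
    exact ⟨⟨I, hI⟩, hxI⟩
  obtain ⟨i, hi⟩ := Subspace.exists_eq_top_of_iUnion_eq_univ hcover
  have hVle : V ≤ i.1.restrictScalars K := by
    intro v hv
    have : (⟨v, hv⟩ : ↥V) ∈ p i := hi ▸ Submodule.mem_top
    exact this
  have : (⊤ : Submodule K B) ≤ i.1.restrictScalars K := by
    rw [← hI]
    refine Submodule.mul_le.2 fun v hv b _ => ?_
    exact Ideal.mul_mem_right b i.1 (hVle hv)
  exact i.2.ne_top (Ideal.eq_top_iff_one i.1 |>.2 (this Submodule.mem_top))

lemma mapMul {K B : Type*} [Field K] [CommRing B] [Algebra K B]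
    (u : B) (W : Submodule K B) :
    Submodule.map (LinearMap.mulLeft K u) W = Submodule.span K {u} * W := by
  ext x
  rw [Submodule.mem_span_singleton_mul]
  simp only [Submodule.mem_map, LinearMap.mulLeft_apply]

lemma core {K B : Type*} [Field K] [Infinite K] [CommRing B] [Algebra K B]
    [FiniteDimensional K B] (V : Submodule K B) (d₀ : ℕ)
    (h : ∀ d ≥ d₀, V ^ d = ⊤) :
    ∀ d : ℕ, finrank K B - 1 ≤ d → V ^ d = ⊤ := by
  rcases subsingleton_or_nontrivial B with hB | hB
  · intro d _
    exact Subsingleton.elim _ _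
  have hI : V * ⊤ = ⊤ := by
    have h1 := h d₀ le_rfl
    have h2 := h (d₀ + 1) (Nat.le_succ _)
    rw [pow_succ, h1] at h2
    rw [mul_comm, h2]
  obtain ⟨u, huV, hu⟩ := existsUnit V hI
  obtain ⟨w, hw⟩ := hu.exists_right_inv
  set e : B ≃ₗ[K] B := LinearEquiv.ofLinear (LinearMap.mulLeft K u) (LinearMap.mulLeft K w)
    (by ext x; simp [mul_assoc, ← mul_assoc u w, hw])
    (by ext x; simp [← mul_assoc, mul_comm w u, hw]) with he
  have hcoe : (e : B →ₗ[K] B) = LinearMap.mulLeft K u := rfl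
  have hmap : ∀ d : ℕ, Submodule.map (e : B →ₗ[K] B) (V ^ d) ≤ V ^ (d + 1) := by
    intro d
    rintro x ⟨y, hy, rfl⟩
    rw [pow_succ, mul_comm]
    exact Submodule.mul_mem_mul huV hy
  have hmono : ∀ d : ℕ, finrank K (V ^ d : Submodule K B) ≤
      finrank K (V ^ (d + 1) : Submodule K B) := by
    intro d
    calc finrank K (V ^ d : Submodule K B)
        = finrank K (Submodule.map (e : B →ₗ[K] B) (V ^ d)) :=
          (LinearEquiv.finrank_map_eq e _).symm
      _ ≤ finrank K (V ^ (d + 1) : Submodule K B) := Submodule.finrank_mono (hmap d)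
  -- plateau propagation
  have hplateau : ∀ d : ℕ,
      finrank K (V ^ (d+1) : Submodule K B) = finrank K (V ^ d : Submodule K B) →
      V ^ d = ⊤ := by
    intro d hd
    have heq : V ^ (d + 1) = Submodule.span K {u} * V ^ d := by
      rw [← mapMul, ← hcoe]
      exact (Submodule.eq_of_le_of_finrank_eq (hmap d)
        (by rw [LinearEquiv.finrank_map_eq]; exact hd.symm)).symm
    have hstep : ∀ n : ℕ, V ^ (d + n) = Submodule.span K {u} ^ n * V ^ d := by
      intro n
      induction n with
      | zero => simp
      | succ n ih =>
        calc V ^ (d + (n+1)) = V ^ (d+n) * V := by rw [← Nat.add_assoc, pow_succ]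
          _ = Submodule.span K {u} ^ n * (V ^ d * V) := by rw [ih, mul_assoc]
          _ = Submodule.span K {u} ^ n * (Submodule.span K {u} * V ^ d) := by
              rw [← pow_succ V d, heq]
          _ = Submodule.span K {u} ^ (n+1) * V ^ d := by rw [← mul_assoc, ← pow_succ]
    have hconst : ∀ n : ℕ, finrank K (V ^ (d + n) : Submodule K B)
        = finrank K (V ^ d : Submodule K B) := by
      intro n
      induction n with
      | zero => rfl
      | succ n ih =>
        have : V ^ (d + (n+1)) = Submodule.map (e : B →ₗ[K] B) (V ^ (d + n)) := by
          rw [hcoe, mapMul, hstep (n+1), hstep n, pow_succ', mul_assoc]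
        rw [this, LinearEquiv.finrank_map_eq e, ih]
    have := hconst d₀
    rw [h (d + d₀) (Nat.le_add_left _ _)] at this
    exact Submodule.eq_top_of_finrank_eq (by rw [← this, finrank_top])
  -- strict growth
  have hgrow : ∀ d : ℕ, V ^ d = ⊤ ∨ d + 1 ≤ finrank K (V ^ d : Submodule K B) := by
    intro d
    induction d with
    | zero =>
      right
      rw [pow_zero, Submodule.one_eq_span]
      rw [finrank_span_singleton (one_ne_zero)]
    | succ d ih =>
      rcases ih with ht | hr
      · left; rw [pow_succ, ht, mul_comm, hI]
      · rcases eq_or_lt_of_le (hmono d) with heq | hlt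
        · left
          have := hplateau d heq.symm
          rw [pow_succ, this, mul_comm, hI]
        · right; omega
  intro d hd
  rcases hgrow d with ht | hr
  · exact ht
  · refine Submodule.eq_top_of_finrank_eq (le_antisymm (Submodule.finrank_le _) ?_)
    have hm : 1 ≤ finrank K B := Module.finrank_pos
    omega

open Module TensorProduct

variable {K L B : Type*} [Field K] [Field L] [Algebra K L] [CommRing B] [Algebra K B]

lemma baseChange_one' : (1 : Submodule K B).baseChange L = 1 := by
  rw [Submodule.one_eq_span, Submodule.baseChange_span, Set.image_singleton,
    Submodule.one_eq_span]
  congr 1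

lemma baseChange_mul' (p q : Submodule K B) :
    (p * q).baseChange L = p.baseChange L * q.baseChange L := by
  apply le_antisymm
  · rw [Submodule.baseChange_eq_span, Submodule.span_le]
    rintro - ⟨x, hx, rfl⟩
    simp only [TensorProduct.mk_apply, SetLike.mem_coe]
    refine Submodule.mul_induction_on hx ?_ ?_
    · intro a ha b hb
      have h1 : (1:L) ⊗ₜ[K] (a*b) = ((1:L) ⊗ₜ[K] a) * ((1:L) ⊗ₜ[K] b) := by
        rw [Algebra.TensorProduct.tmul_mul_tmul, one_mul]
      rw [h1]
      exact Submodule.mul_mem_mul (Submodule.tmul_mem_baseChange_of_mem 1 ha)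
        (Submodule.tmul_mem_baseChange_of_mem 1 hb)
    · intro x y hx hy
      rw [tmul_add]
      exact Submodule.add_mem _ hx hy
  · refine Submodule.mul_le.2 fun ξ hξ η hη => ?_
    rw [Submodule.baseChange_eq_span] at hξ
    induction hξ using Submodule.span_induction with
    | mem ξ hξm =>
      obtain ⟨a, ha, rfl⟩ := hξm
      rw [Submodule.baseChange_eq_span] at hη
      induction hη using Submodule.span_induction with
      | mem η hηm =>
        obtain ⟨b, hb, rfl⟩ := hηm
        simp only [TensorProduct.mk_apply]
        rw [Algebra.TensorProduct.tmul_mul_tmul, one_mul]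
        exact Submodule.tmul_mem_baseChange_of_mem 1 (Submodule.mul_mem_mul ha hb)
      | zero => rw [mul_zero]; exact Submodule.zero_mem _
      | add η₁ η₂ h1 h2 ih1 ih2 => rw [mul_add]; exact Submodule.add_mem _ ih1 ih2
      | smul c η hmem ih => rw [mul_smul_comm]; exact Submodule.smul_mem _ c ih
    | zero => rw [zero_mul]; exact Submodule.zero_mem _
    | add ξ₁ ξ₂ h1 h2 ih1 ih2 => rw [add_mul]; exact Submodule.add_mem _ ih1 ih2
    | smul c ξ hmem ih => rw [smul_mul_assoc]; exact Submodule.smul_mem _ c ih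

lemma baseChange_reflect_top {M : Type*} [AddCommGroup M] [Module K M]
    (S : Submodule K M) (h : S.baseChange L = ⊤) : S = ⊤ := by
  by_contra hne
  obtain ⟨f, hf0, hf⟩ := S.exists_dual_map_eq_bot_of_lt_top (lt_top_iff_ne_top.2 hne)
    inferInstance
  have hker : S.baseChange L ≤ LinearMap.ker (LinearMap.baseChange L f) := by
    rw [Submodule.baseChange_eq_span, Submodule.span_le]
    rintro - ⟨x, hx, rfl⟩
    simp only [TensorProduct.mk_apply, SetLike.mem_coe, LinearMap.mem_ker,
      LinearMap.baseChange_tmul]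
    have : f x = 0 := by
      have : f x ∈ S.map f := Submodule.mem_map_of_mem hx
      rwa [hf, Submodule.mem_bot] at this
    rw [this, tmul_zero]
  rw [h, top_le_iff] at hker
  obtain ⟨x, hx⟩ : ∃ x, f x ≠ 0 := by
    by_contra hall
    push_neg at hall
    exact hf0 (LinearMap.ext fun x => hall x)
  have h0 : LinearMap.baseChange L f ((1:L) ⊗ₜ[K] x) = 0 := by
    rw [LinearMap.ker_eq_top] at hker
    rw [hker]; rfl
  rw [LinearMap.baseChange_tmul] at h0
  have := congrArg (TensorProduct.rid K L) h0
  rw [map_zero] at this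
  rw [TensorProduct.rid_tmul] at this
  exact hx (by simpa using this)

lemma keyLemma {K B : Type*} [Field K] [CommRing B] [Algebra K B] [FiniteDimensional K B]
    (V : Submodule K B) (d₀ : ℕ) (h : ∀ d ≥ d₀, V ^ d = ⊤) :
    ∀ d : ℕ, finrank K B - 1 ≤ d → V ^ d = ⊤ := by
  let L := AlgebraicClosure K
  have hpow : ∀ d : ℕ, (V ^ d).baseChange L = (V.baseChange L) ^ d := by
    intro d
    induction d with
    | zero => rw [pow_zero, pow_zero, baseChange_one']
    | succ d ih => rw [pow_succ, pow_succ, baseChange_mul', ih]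
  have hfin : FiniteDimensional L (L ⊗[K] B) := inferInstance
  have hrank : finrank L (L ⊗[K] B) = finrank K B := Module.finrank_baseChange
  intro d hd
  have htop : (V.baseChange L) ^ d = ⊤ := by
    refine core (V.baseChange L) d₀ (fun e he => ?_) d (by rw [hrank]; exact hd)
    rw [← hpow, h e he, Submodule.baseChange_top]
  refine baseChange_reflect_top (L := L) _ ?_
  rw [hpow, htop]

open Module MvPolynomial

section Red
variable {k : Type} [Field k] {B : Type} [CommRing B] [Algebra k B] {N : ℕ}
  (res : ∀ d : ℕ, (homogeneousSubmodule (Fin (N + 1)) k d) →ₗ[k] B)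

lemma degree_single' (i : Fin (N+1)) : (Finsupp.single i 1).degree = 1 := by
  exact Finsupp.degree_single i 1

-- decomposition of a monomial of positive degree
lemma monomial_mem_pow
    (hone : res 0 ⟨1, (mem_homogeneousSubmodule _ _).2 (isHomogeneous_one _ _)⟩ = 1)
    (hmul : ∀ (d e : ℕ) (F : homogeneousSubmodule (Fin (N + 1)) k d)
      (G : homogeneousSubmodule (Fin (N + 1)) k e),
      res (d + e) ⟨(F : MvPolynomial (Fin (N + 1)) k) * (G : MvPolynomial (Fin (N + 1)) k),
        (mem_homogeneousSubmodule _ _).2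
          (((mem_homogeneousSubmodule _ _).1 F.2).mul
            ((mem_homogeneousSubmodule _ _).1 G.2))⟩ = res d F * res e G) :
    ∀ (d : ℕ) (m : Fin (N + 1) →₀ ℕ) (c : k) (hm : m.degree = d),
      res d ⟨monomial m c, (mem_homogeneousSubmodule _ _).2 (isHomogeneous_monomial c hm)⟩
        ∈ (LinearMap.range (res 1)) ^ d := by
  intro d
  induction d with
  | zero =>
    intro m c hm
    have hm0 : m = 0 := (Finsupp.degree_eq_zero_iff m).1 hm
    subst hm0
    have h1 : (monomial (0 : Fin (N+1) →₀ ℕ) c : MvPolynomial (Fin (N+1)) k)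
        = c • (1 : MvPolynomial (Fin (N+1)) k) := by
      rw [smul_eq_C_mul, mul_one, C_apply]
    have : (⟨monomial 0 c, (mem_homogeneousSubmodule _ _).2 (isHomogeneous_monomial c rfl)⟩ :
        homogeneousSubmodule (Fin (N+1)) k 0)
        = c • ⟨1, (mem_homogeneousSubmodule _ _).2 (isHomogeneous_one _ _)⟩ := by
      apply Subtype.ext
      simpa using h1
    rw [this, map_smul, hone, pow_zero, Submodule.one_eq_span]
    exact Submodule.smul_mem _ c (Submodule.mem_span_singleton_self _)
  | succ d ih =>
    intro m c hm
    have hex : ∃ i, m i ≠ 0 := by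
      by_contra hall
      push_neg at hall
      have : m = 0 := by ext i; exact hall i
      subst this
      simp [Finsupp.degree] at hm
    obtain ⟨i, hi⟩ := hex
    set m' := m - Finsupp.single i 1 with hm'
    have hsum : m' + Finsupp.single i 1 = m := by
      ext j
      simp only [Finsupp.add_apply, Finsupp.tsub_apply, Finsupp.single_apply, hm']
      by_cases hji : i = j
      · subst hji
        simp only [if_true, eq_self_iff_true]
        omega
      · simp only [if_neg hji]
        omega
    have hdeg' : m'.degree = d := by
      have h1 : m.degree = m'.degree + (Finsupp.single i 1).degree := by
        conv_lhs => rw [← hsum]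
        simp only [Finsupp.degree_eq_weight_one, map_add]
      have h2 := degree_single' i
      omega
    have hXdeg : (Finsupp.single i 1).degree = 1 := degree_single' i
    have hprod : (monomial m c : MvPolynomial (Fin (N+1)) k)
        = monomial m' c * monomial (Finsupp.single i 1) 1 := by
      rw [monomial_mul, mul_one, hsum]
    have key := hmul d 1 ⟨monomial m' c, (mem_homogeneousSubmodule _ _).2
        (isHomogeneous_monomial c hdeg')⟩
      ⟨monomial (Finsupp.single i 1) 1, (mem_homogeneousSubmodule _ _).2
        (isHomogeneous_monomial 1 hXdeg)⟩
    have heq : res (d+1) ⟨monomial m c, (mem_homogeneousSubmodule _ _).2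
          (isHomogeneous_monomial c hm)⟩
        = res d ⟨monomial m' c, (mem_homogeneousSubmodule _ _).2
            (isHomogeneous_monomial c hdeg')⟩ *
          res 1 ⟨monomial (Finsupp.single i 1) 1, (mem_homogeneousSubmodule _ _).2
            (isHomogeneous_monomial 1 hXdeg)⟩ := by
      rw [← key]
      congr 1
      exact Subtype.ext hprod
    rw [heq, pow_succ]
    exact Submodule.mul_mem_mul (ih m' c hdeg') (LinearMap.mem_range_self _ _)
lemma range_eq_pow
    (hone : res 0 ⟨1, (mem_homogeneousSubmodule _ _).2 (isHomogeneous_one _ _)⟩ = 1)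
    (hmul : ∀ (d e : ℕ) (F : homogeneousSubmodule (Fin (N + 1)) k d)
      (G : homogeneousSubmodule (Fin (N + 1)) k e),
      res (d + e) ⟨(F : MvPolynomial (Fin (N + 1)) k) * (G : MvPolynomial (Fin (N + 1)) k),
        (mem_homogeneousSubmodule _ _).2
          (((mem_homogeneousSubmodule _ _).1 F.2).mul
            ((mem_homogeneousSubmodule _ _).1 G.2))⟩ = res d F * res e G) :
    ∀ d : ℕ, LinearMap.range (res d) = (LinearMap.range (res 1)) ^ d := by
  intro d
  apply le_antisymm
  · -- range ≤ pow
    rintro - ⟨⟨F, hF⟩, rfl⟩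
    have hFhom : MvPolynomial.IsHomogeneous F d := (mem_homogeneousSubmodule _ _).1 hF
    have pf : ∀ m ∈ F.support, (monomial m (coeff m F) : MvPolynomial (Fin (N+1)) k)
        ∈ homogeneousSubmodule (Fin (N+1)) k d := by
      intro m hm
      refine (mem_homogeneousSubmodule _ _).2 (isHomogeneous_monomial _ ?_)
      have := hFhom (MvPolynomial.mem_support_iff.1 hm)
      rw [Finsupp.degree_eq_weight_one]
      exact this
    have hdeg : ∀ m ∈ F.support, (m : Fin (N+1) →₀ ℕ).degree = d := by
      intro m hm
      have := hFhom (MvPolynomial.mem_support_iff.1 hm)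
      rw [Finsupp.degree_eq_weight_one]
      exact this
    have hFsum : (⟨F, hF⟩ : homogeneousSubmodule (Fin (N+1)) k d)
        = ∑ m ∈ F.support.attach,
          (⟨monomial m.1 (coeff m.1 F), pf m.1 m.2⟩ : homogeneousSubmodule (Fin (N+1)) k d) := by
      apply Subtype.ext
      rw [AddSubmonoidClass.coe_finset_sum]
      simp only []
      rw [Finset.sum_attach F.support (fun m => (monomial m (coeff m F) :
        MvPolynomial (Fin (N+1)) k))]
      exact F.as_sum
    rw [hFsum, map_sum]
    refine Submodule.sum_mem _ fun m hm => ?_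
    have := monomial_mem_pow res hone hmul d m.1 (coeff m.1 F) (hdeg m.1 m.2)
    convert this using 2
  · -- pow ≤ range
    induction d with
    | zero =>
      rw [pow_zero, Submodule.one_eq_span, Submodule.span_le, Set.singleton_subset_iff]
      exact ⟨⟨1, (mem_homogeneousSubmodule _ _).2 (isHomogeneous_one _ _)⟩, hone⟩
    | succ d ih =>
      rw [pow_succ]
      refine Submodule.mul_le.2 fun x hx y hy => ?_
      obtain ⟨F, rfl⟩ := ih hx
      obtain ⟨G, rfl⟩ := hy
      exact ⟨⟨(F : MvPolynomial (Fin (N+1)) k) * G, _⟩, hmul d 1 F G⟩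

end Red

/-- Let `Y = Spec B` be a finite scheme over a field `k` (`B` a finite-dimensional
`k`-algebra) embedded as a closed subscheme of `ℙ^N_k`.  We encode the embedding by the
system of restriction maps `res d : H⁰(ℙ^N, O(d)) → H⁰(Y, O_Y(d)) ≅ B` (after a choice
of trivialization of `O_Y(1)`): these are `k`-linear maps on the spaces of degree-`d`
homogeneous forms which are multiplicative, send `1` to `1`, and (since `Y ⊂ ℙ^N` is a
closed subscheme, by Serre vanishing) are surjective for all sufficiently large `d`.
The conclusion (Poonen's Lemma 2.1) is that the restriction map is surjective for
every `d ≥ dim_k B − 1`. -/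
theorem stmt10 (k : Type) [Field k] (B : Type) [CommRing B] [Algebra k B]
    [FiniteDimensional k B] (N : ℕ)
    (res : ∀ d : ℕ, (homogeneousSubmodule (Fin (N + 1)) k d) →ₗ[k] B)
    (hone : res 0 ⟨1, (mem_homogeneousSubmodule _ _).2 (isHomogeneous_one _ _)⟩ = 1)
    (hmul : ∀ (d e : ℕ) (F : homogeneousSubmodule (Fin (N + 1)) k d)
      (G : homogeneousSubmodule (Fin (N + 1)) k e),
      res (d + e) ⟨(F : MvPolynomial (Fin (N + 1)) k) * (G : MvPolynomial (Fin (N + 1)) k),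
        (mem_homogeneousSubmodule _ _).2
          (((mem_homogeneousSubmodule _ _).1 F.2).mul
            ((mem_homogeneousSubmodule _ _).1 G.2))⟩ = res d F * res e G)
    (hclosed : ∃ d₀ : ℕ, ∀ d ≥ d₀, Function.Surjective (res d)) :
    ∀ d : ℕ, Module.finrank k B - 1 ≤ d → Function.Surjective (res d) := by
  obtain ⟨d₀, hd₀⟩ := hclosed
  have hrange := range_eq_pow res hone hmul
  intro d hd
  rw [← LinearMap.range_eq_top, hrange d]
  exact keyLemma (LinearMap.range (res 1)) d₀
    (fun e he => by rw [← hrange e]; exact LinearMap.range_eq_top.2 (hd₀ e he)) d hd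
end

section
/- Let X be an irreducible scheme, Z ⊂ X a closed subset, and S a finite set of points of Z. Let W be the semilocal scheme Spec O_{X,S}. If Z is local in W in the sense that W ∩ Z has a unique closed point x, and a finite morphism π: W → W' maps W ∩ Z bijectively onto its image with trivial residue extension at x and injectivity on the fiber over π(x), then π restricted to W ∩ Z is a closed immersion. -/
open AlgebraicGeometry CategoryTheory

universe u

open IsLocalRing in
/-- Surjective local ring homomorphisms map the maximal ideal onto the maximal ideal. -/
theorem mapMaxOfSurj {R S : Type u} [CommRing R] [CommRing S] [IsLocalRing R] [IsLocalRing S]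
    (g : R →+* S) [IsLocalHom g] (hg : Function.Surjective g) :
    (maximalIdeal R).map g = maximalIdeal S := by
  apply le_antisymm
  · rw [Ideal.map_le_iff_le_comap]
    intro a ha hu
    exact ha (IsLocalHom.map_nonunit a hu)
  · intro b hb
    obtain ⟨a, rfl⟩ := hg b
    have ha : a ∈ maximalIdeal R := fun hu => hb (hu.map g)
    exact Ideal.mem_map_of_mem g ha

open IsLocalRing in
/-- The key commutative-algebra (Nakayama) lemma: a finite ring map into a local ring which is
surjective modulo `q`-primary data is surjective. -/
theorem keySurj {A B : Type u} [CommRing A] [CommRing B] [IsLocalRing B]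
    (φ : A →+* B) (hfin : φ.Finite)
    (hm : maximalIdeal B ≤ (((maximalIdeal B).comap φ).map φ : Ideal B))
    (hres : ∀ b : B, ∃ a s : A, φ s ∉ maximalIdeal B ∧
      φ s * b - φ a ∈ maximalIdeal B) :
    Function.Surjective φ := by
  algebraize [φ]
  have hfin' : Module.Finite A B := hfin
  have halg : algebraMap A B = φ := rfl
  set q : Ideal A := (maximalIdeal B).comap φ with hq
  have hqprime : q.IsPrime := Ideal.IsPrime.comap φ
  set N : Submodule A B := LinearMap.range (Algebra.linearMap A B) with hN
  set C := B ⧸ N with hC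
  have hCfin : Module.Finite A C := Module.Finite.quotient A N
  -- step: ∀ c, ∃ s ∉ q, s • c ∈ q • ⊤
  have hstep : ∀ c : C, ∃ s ∉ q, s • c ∈ q • (⊤ : Submodule A C) := by
    intro c
    obtain ⟨b, rfl⟩ := Submodule.Quotient.mk_surjective N c
    obtain ⟨a, s, hs, hr⟩ := hres b
    refine ⟨s, by simpa [hq] using hs, ?_⟩
    have hsb : s • (Submodule.Quotient.mk b : C) =
        Submodule.Quotient.mk (φ s * b - φ a) := by
      rw [← Submodule.Quotient.mk_smul, Submodule.Quotient.eq]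
      have : (s • b) - (φ s * b - φ a) = φ a := by
        rw [Algebra.smul_def, halg]; ring
      rw [this]
      exact ⟨a, rfl⟩
    rw [hsb]
    have hmem : φ s * b - φ a ∈ q • (⊤ : Submodule A B) := by
      rw [Ideal.smul_top_eq_map]
      exact hm hr
    have h3 : Submodule.map N.mkQ (q • ⊤) = q • (⊤ : Submodule A C) := by
      rw [Submodule.map_smul'' q (⊤ : Submodule A B) N.mkQ, Submodule.map_top,
        Submodule.range_mkQ]
    rw [← h3]
    exact Submodule.mem_map_of_mem hmem
  -- localize at q and apply Nakayama
  have hsub : Subsingleton (LocalizedModule q.primeCompl C) := by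
    set Aq := Localization.AtPrime q
    set Cq := LocalizedModule q.primeCompl C
    have hCqfin : Module.Finite Aq Cq :=
      Module.Finite.of_isLocalizedModule q.primeCompl
        (LocalizedModule.mkLinearMap q.primeCompl C)
    have hle : (⊤ : Submodule Aq Cq) ≤ maximalIdeal Aq • ⊤ := by
      rintro xq -
      induction xq using LocalizedModule.induction_on with
      | h c u =>
        obtain ⟨s, hs, hsc⟩ := hstep c
        have key : LocalizedModule.mk (s • c) (1 : q.primeCompl) ∈
            maximalIdeal Aq • (⊤ : Submodule Aq Cq) := by
          refine Submodule.smul_induction_on hsc ?_ ?_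
          · intro a ha c' _
            have : (LocalizedModule.mk (a • c') (1 : q.primeCompl) : Cq) =
                algebraMap A Aq a • LocalizedModule.mk c' 1 := by
              rw [← Localization.mk_one_eq_algebraMap, LocalizedModule.mk_smul_mk, one_mul]
            rw [this]
            exact Submodule.smul_mem_smul
              (by rw [← Localization.AtPrime.map_eq_maximalIdeal]
                  exact Ideal.mem_map_of_mem _ ha) trivial
          · intro v w hv hw
            have : (LocalizedModule.mk (v + w) (1 : q.primeCompl) : Cq) =
                LocalizedModule.mk v 1 + LocalizedModule.mk w 1 := by
              rw [LocalizedModule.mk_add_mk]; simp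
            rw [this]; exact Submodule.add_mem _ hv hw
        have heq : (LocalizedModule.mk c u : Cq) =
            Localization.mk 1 (⟨s, hs⟩ * u) • LocalizedModule.mk (s • c) 1 := by
          rw [LocalizedModule.mk_smul_mk, one_smul, mul_one]
          exact (LocalizedModule.mk_cancel_common_left ⟨s, hs⟩ u c).symm
        rw [heq]
        exact Submodule.smul_mem _ _ key
    have hbot : (⊤ : Submodule Aq Cq) = ⊥ :=
      Submodule.eq_bot_of_le_smul_of_le_jacobson_bot (maximalIdeal Aq)
        (⊤ : Submodule Aq Cq) Module.Finite.fg_top hle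
        (le_of_eq (jacobson_eq_maximalIdeal (⊥ : Ideal Aq) bot_ne_top).symm)
    exact (subsingleton_iff_forall_eq 0).mpr fun y =>
      (Submodule.mem_bot Aq).mp (hbot ▸ Submodule.mem_top)
  -- conclude C = 0 by a lying-over argument
  have hqnotsupp : (⟨q, hqprime⟩ : PrimeSpectrum A) ∉ Module.support A C :=
    Module.notMem_support_iff.mpr hsub
  have hNtop : N = ⊤ := by
    by_contra hne
    have : Nontrivial C := (Submodule.Quotient.nontrivial_iff (p := N)).mpr hne
    have hann : Module.annihilator A C ≠ ⊤ := by
      intro h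
      obtain ⟨c, hc⟩ := exists_ne (0 : C)
      have h1 : (1 : A) ∈ Module.annihilator A C := h ▸ Submodule.mem_top
      exact hc (by simpa using Module.mem_annihilator.mp h1 c)
    obtain ⟨p, hpmax, hple⟩ := Ideal.exists_le_maximal _ hann
    have hker : RingHom.ker (algebraMap A B) ≤ p := by
      refine le_trans ?_ hple
      intro a ha
      rw [Module.mem_annihilator]
      intro c
      obtain ⟨b, rfl⟩ := Submodule.Quotient.mk_surjective N c
      rw [← Submodule.Quotient.mk_smul, Algebra.smul_def,
        RingHom.mem_ker.mp ha, zero_mul]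
      rfl
    have : Algebra.IsIntegral A B := Algebra.IsIntegral.of_finite A B
    obtain ⟨Q, -, hQprime, hQcomap⟩ :=
      Ideal.exists_ideal_over_prime_of_isIntegral p (⊥ : Ideal B)
        (by rwa [← RingHom.ker_eq_comap_bot])
    have hpq : p ≤ q := by
      rw [← hQcomap, hq]
      exact Ideal.comap_mono (le_maximalIdeal hQprime.ne_top)
    exact hqnotsupp (Module.mem_support_iff_of_finite.mpr (le_trans hple hpq))
  intro b
  obtain ⟨a, ha⟩ := hNtop ▸ (Submodule.mem_top : b ∈ ⊤)
  exact ⟨a, ha⟩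

open IsLocalRing in
/-- In a localization at a prime, the maximal ideal is the image of the prime. -/
theorem mapPrimeEqMax {R S : Type*} [CommRing R] [CommRing S] [Algebra R S] (p : Ideal R)
    [p.IsPrime] [IsLocalization.AtPrime S p] [IsLocalRing S] :
    p.map (algebraMap R S) = maximalIdeal S := by
  apply le_antisymm
  · rw [Ideal.map_le_iff_le_comap, ← IsLocalization.AtPrime.comap_maximalIdeal S p]
  · intro t ht
    obtain ⟨⟨a, s⟩, hts⟩ := IsLocalization.surj p.primeCompl t
    have hs : IsUnit (algebraMap R S s) := IsLocalization.map_units S s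
    by_cases ha : a ∈ p
    · obtain ⟨v, hv⟩ := hs.exists_right_inv
      have h1 : t = algebraMap R S a * v := by
        calc t = t * (algebraMap R S s * v) := by rw [hv, mul_one]
        _ = (t * algebraMap R S s) * v := by ring
        _ = algebraMap R S a * v := by rw [hts]
      rw [h1]
      exact Ideal.mul_mem_right _ _ (Ideal.mem_map_of_mem _ ha)
    · exfalso
      have ha' : IsUnit (algebraMap R S a) :=
        IsLocalization.map_units S (⟨a, ha⟩ : p.primeCompl)
      exact ht (isUnit_of_mul_isUnit_left (hts ▸ ha'))

open IsLocalRing in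
/-- The Step-5 argument of the paper. -/
theorem stmt14 (W W' Z : Scheme.{u}) [IsAffine W] [IsAffine W']
    [IsNoetherian W] [IsNoetherian W']
    (π : W ⟶ W') [IsFinite π]
    (i : Z ⟶ W) [IsClosedImmersion i]
    (x : Z) (hx : ∀ z : Z, x ∈ closure {z})
    (hinj : Function.Injective (⇑π.base ∘ ⇑i.base))
    (hfiber : ∀ z : Z, π.base (i.base z) = π.base (i.base x) → z = x)
    (hres : Function.Bijective ((i ≫ π).residueFieldMap x))
    (hunram : (IsLocalRing.maximalIdeal
        (W'.presheaf.stalk (π.base (i.base x)))).map (π.stalkMap (i.base x)).hom =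
      IsLocalRing.maximalIdeal (W.presheaf.stalk (i.base x))) :
    IsClosedImmersion (i ≫ π) := by
  have hZaff : IsAffine Z := isAffine_of_isAffineHom i
  set f : Z ⟶ W' := i ≫ π with hf
  have hffin : IsFinite f := inferInstance
  have hφfin : RingHom.Finite (f.appTop.hom) :=
    IsFinite.finite_app f ⊤ (isAffineOpen_top W')
  set φ : Γ(W', ⊤) →+* Γ(Z, ⊤) := f.appTop.hom with hφ
  -- the prime of `Γ(Z, ⊤)` corresponding to `x`
  have hT : IsAffineOpen (⊤ : Z.Opens) := isAffineOpen_top Z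
  set pZ : PrimeSpectrum Γ(Z, ⊤) := hT.primeIdealOf ⟨x, trivial⟩ with hpZ
  have hinvpZ : Z.isoSpec.inv.base pZ = x := by
    have h0 := hT.fromSpec_primeIdealOf ⟨x, trivial⟩
    rwa [IsAffineOpen.fromSpec_top] at h0
  have hcancel : ∀ P : PrimeSpectrum Γ(Z, ⊤),
      Z.isoSpec.hom.base (Z.isoSpec.inv.base P) = P := fun P => by
    show (Z.isoSpec.inv ≫ Z.isoSpec.hom).base P = P; rw [Iso.inv_hom_id]; rfl
  -- every prime is contained in `pZ`
  have hple : ∀ P : PrimeSpectrum Γ(Z, ⊤), P.asIdeal ≤ pZ.asIdeal := by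
    intro P
    have hsp : (Z.isoSpec.inv.base P : Z) ⤳ x :=
      specializes_iff_mem_closure.mpr (hx _)
    have hsp2 : P ⤳ pZ := by
      have := hsp.map Z.isoSpec.hom.base.hom.continuous
      rwa [hcancel, ← hinvpZ, hcancel] at this
    exact (PrimeSpectrum.le_iff_specializes P pZ).mpr hsp2
  have hmax : pZ.asIdeal.IsMaximal := by
    obtain ⟨M, hM, hMle⟩ := Ideal.exists_le_maximal _ pZ.isPrime.ne_top
    have h2 : M ≤ pZ.asIdeal := hple ⟨M, hM.isPrime⟩
    have h3 : M = pZ.asIdeal := le_antisymm h2 hMle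
    rwa [h3] at hM
  have hloc : IsLocalRing Γ(Z, ⊤) :=
    IsLocalRing.of_unique_max_ideal ⟨pZ.asIdeal, hmax, fun I hI =>
      hI.eq_of_le pZ.isPrime.ne_top (hple ⟨I, hI.isPrime⟩)⟩
  have hmB : maximalIdeal Γ(Z, ⊤) = pZ.asIdeal := (eq_maximalIdeal hmax).symm
  -- stalk data
  set y : W' := π.base (i.base x) with hy
  letI algZ : Algebra Γ(Z, ⊤) (Z.presheaf.stalk x) :=
    TopCat.Presheaf.algebra_section_stalk Z.presheaf (⟨x, trivial⟩ : (⊤ : Z.Opens))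
  haveI hlocZ : IsLocalization.AtPrime (Z.presheaf.stalk x) pZ.asIdeal :=
    hT.isLocalization_stalk ⟨x, show x ∈ (⊤ : Z.Opens) from trivial⟩
  set gZ : Γ(Z, ⊤) →+* Z.presheaf.stalk x := algebraMap Γ(Z, ⊤) (Z.presheaf.stalk x) with hgZ
  have hgZbij : Function.Bijective gZ := by
    refine (IsLocalization.atUnits Γ(Z, ⊤) pZ.asIdeal.primeCompl
      (S := Z.presheaf.stalk x) ?_).bijective
    intro s hs
    show IsUnit s
    by_contra hnon
    exact hs (hmB ▸ (mem_maximalIdeal s).mpr (mem_nonunits_iff.mpr hnon) : s ∈ pZ.asIdeal)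
  -- the affine-open data on `W'` at `y`
  have hT' : IsAffineOpen (⊤ : W'.Opens) := isAffineOpen_top W'
  set pW : PrimeSpectrum Γ(W', ⊤) := hT'.primeIdealOf ⟨y, trivial⟩ with hpW
  letI algW : Algebra Γ(W', ⊤) (W'.presheaf.stalk y) :=
    TopCat.Presheaf.algebra_section_stalk W'.presheaf (⟨y, trivial⟩ : (⊤ : W'.Opens))
  haveI hlocW : IsLocalization.AtPrime (W'.presheaf.stalk y) pW.asIdeal :=
    hT'.isLocalization_stalk ⟨y, show y ∈ (⊤ : W'.Opens) from trivial⟩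
  set gW : Γ(W', ⊤) →+* W'.presheaf.stalk y :=
    algebraMap Γ(W', ⊤) (W'.presheaf.stalk y) with hgW
  set stZ : W'.presheaf.stalk y →+* Z.presheaf.stalk x := (f.stalkMap x).hom with hstZ
  -- commuting square
  have hsquare : ∀ a : Γ(W', ⊤), stZ (gW a) = gZ (φ a) := by
    intro a
    exact Scheme.Hom.germ_stalkMap_apply f ⊤ x trivial a
  -- maximal ideal of the stalk of Z
  have hmZ : maximalIdeal (Z.presheaf.stalk x) =
      (maximalIdeal (W'.presheaf.stalk y)).map stZ := by
    have hcomp : stZ = (i.stalkMap x).hom.comp (π.stalkMap (i.base x)).hom := by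
      show ((i ≫ π).stalkMap x).hom = _
      rw [Scheme.Hom.stalkMap_comp]; rfl
    rw [hcomp, ← Ideal.map_map, hunram]
    exact (mapMaxOfSurj (i.stalkMap x).hom (i.stalkMap_surjective x)).symm
  have hmW : maximalIdeal (W'.presheaf.stalk y) = pW.asIdeal.map gW :=
    (mapPrimeEqMax pW.asIdeal (S := W'.presheaf.stalk y)).symm
  -- maximal ideal of B corresponds through gZ
  have hcomapZ : Ideal.comap gZ (maximalIdeal (Z.presheaf.stalk x)) = maximalIdeal Γ(Z, ⊤) := by
    ext a
    simp only [Ideal.mem_comap, mem_maximalIdeal, mem_nonunits_iff]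
    constructor
    · intro h hu; exact h (hu.map gZ)
    · intro h hu
      apply h
      obtain ⟨v, hv⟩ := hu.exists_right_inv
      obtain ⟨w, rfl⟩ := hgZbij.2 v
      exact IsUnit.of_mul_eq_one w (hgZbij.1 (by rw [map_mul, hv, map_one]))
  have hmapZ : Ideal.map gZ (maximalIdeal Γ(Z, ⊤)) = maximalIdeal (Z.presheaf.stalk x) := by
    rw [← hcomapZ]
    exact Ideal.map_comap_of_surjective gZ hgZbij.2 _
  -- m_B = map φ pW
  have hkey : maximalIdeal Γ(Z, ⊤) = pW.asIdeal.map φ := by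
    have h1 : Ideal.map gZ (pW.asIdeal.map φ) = Ideal.map gZ (maximalIdeal Γ(Z, ⊤)) := by
      rw [hmapZ, hmZ, hmW, Ideal.map_map, Ideal.map_map]
      congr 1
      ext a
      exact (hsquare a).symm
    have := congrArg (Ideal.comap gZ) h1
    rwa [Ideal.comap_map_of_bijective gZ hgZbij, Ideal.comap_map_of_bijective gZ hgZbij,
      eq_comm] at this
  -- the hypotheses of keySurj
  have hm : maximalIdeal Γ(Z, ⊤) ≤
      ((maximalIdeal Γ(Z, ⊤)).comap φ).map φ := by
    calc maximalIdeal Γ(Z, ⊤) = pW.asIdeal.map φ := hkey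
    _ ≤ ((maximalIdeal Γ(Z, ⊤)).comap φ).map φ := Ideal.map_mono (fun a ha =>
        Ideal.mem_comap.mpr (hkey ▸ Ideal.mem_map_of_mem φ ha))
  have hresB : ∀ b : Γ(Z, ⊤), ∃ a s : Γ(W', ⊤), φ s ∉ maximalIdeal Γ(Z, ⊤) ∧
      φ s * b - φ a ∈ maximalIdeal Γ(Z, ⊤) := by
    intro b
    -- surjectivity of the residue field map
    obtain ⟨tbar, htbar⟩ := hres.2 (Z.residue x (gZ b))
    obtain ⟨t, rfl⟩ := W'.residue_surjective y tbar
    have ht : Z.residue x (stZ t) = Z.residue x (gZ b) := by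
      have hcomm := Scheme.residue_residueFieldMap f x
      have h3 := congrArg (fun g => g t) hcomm
      simp only [CommRingCat.comp_apply] at h3
      exact h3.symm.trans htbar
    have hmem : stZ t - gZ b ∈ maximalIdeal (Z.presheaf.stalk x) := by
      have : Ideal.Quotient.mk (maximalIdeal (Z.presheaf.stalk x)) (stZ t) =
          Ideal.Quotient.mk (maximalIdeal (Z.presheaf.stalk x)) (gZ b) := ht
      exact Ideal.Quotient.eq.mp this
    obtain ⟨⟨a, s⟩, hsurj⟩ := IsLocalization.surj pW.asIdeal.primeCompl t
    refine ⟨a, s, ?_, ?_⟩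
    · intro hmem'
      have h1 : gZ (φ s) ∈ maximalIdeal (Z.presheaf.stalk x) := by
        rw [← hcomapZ] at hmem'
        exact hmem'
      have h2 : IsUnit (gZ (φ s)) := by
        rw [← hsquare]
        exact (IsLocalization.map_units (M := pW.asIdeal.primeCompl) _ s).map stZ
      exact h1 h2
    · rw [← hcomapZ, Ideal.mem_comap]
      have h4 : gZ (φ s * b - φ a) = stZ (gW s) * (gZ b - stZ t) := by
        rw [map_sub, map_mul, ← hsquare s, ← hsquare a, ← hsurj, map_mul]
        ring
      rw [h4]
      have h5 : gZ b - stZ t ∈ maximalIdeal (Z.presheaf.stalk x) := by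
        have h6 := Submodule.neg_mem _ hmem
        rwa [neg_sub] at h6
      exact Ideal.mul_mem_left _ _ h5
  have hsurj : Function.Surjective φ := keySurj φ hφfin hm hresB
  exact IsClosedImmersion.of_surjective_of_isAffine f hsurj
end
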